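/- Let A → B be a ring homomorphism such that B is a finitely generated free A-module. Then for A-modules M and N, Hom_B(Hom_A(B,M), Hom_A(B,N)) is isomorphic to Hom_A(B, Hom_A(M,N)) as A-modules. -/

import Mathlib

open CategoryTheory ModuleCat

section Aux

variable (A B : Type*) [CommRing A] [CommRing B] [Algebra A B]

/-- `B` restricted along `algebraMap A B`, as an object of `ModuleCat A`. -/
noncomputable abbrev RB : ModuleCat A :=
  (ModuleCat.restrictScalars (algebraMap A B)).obj (ModuleCat.of B B)

/-- Identity cast from the restricted `B` to `B`. -/
def vB (x : RB A B) : B := x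

/-- Identity cast from `B` to the restricted `B`. -/
def bV (x : B) : RB A B := x

variable (P : ModuleCat A)

/-- Identity cast realizing the carrier of the coextended module as a linear-map type. -/
def coFn (g : (ModuleCat.coextendScalars (algebraMap A B)).obj P) : RB A B →ₗ[A] P := g

/-- Inverse identity cast. -/
def coMk (g : RB A B →ₗ[A] P) : (ModuleCat.coextendScalars (algebraMap A B)).obj P := g

/-- Identity cast from the restricted coextended module to the coextended module. -/
def reCo (g : (ModuleCat.restrictScalars (algebraMap A B)).obj
    ((ModuleCat.coextendScalars (algebraMap A B)).obj P)) :
    (ModuleCat.coextendScalars (algebraMap A B)).obj P := g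

/-- Inverse identity cast. -/
def coRe (g : (ModuleCat.coextendScalars (algebraMap A B)).obj P) :
    (ModuleCat.restrictScalars (algebraMap A B)).obj
      ((ModuleCat.coextendScalars (algebraMap A B)).obj P) := g

/-- The restricted `B` is just `B` with its algebra `A`-module structure. -/
def eB : (RB A B : Type _) ≃ₗ[A] B where
  toFun := vB A B
  invFun := bV A B
  map_add' _ _ := rfl
  map_smul' a x := by
    show vB A B ((a : A) • x) = a • vB A B x
    rw [show vB A B (a • x) = algebraMap A B a * vB A B x from rfl]
    exact (Algebra.smul_def a (vB A B x)).symm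
  left_inv _ := rfl
  right_inv _ := rfl

/-- Restricting the coextended module is just the `A`-module of `A`-linear maps. -/
def eCo :
    ((ModuleCat.restrictScalars (algebraMap A B)).obj
        ((ModuleCat.coextendScalars (algebraMap A B)).obj P) : Type _) ≃ₗ[A]
      ((RB A B : Type _) →ₗ[A] P) where
  toFun g := coFn A B P (reCo A B P g)
  invFun g := coRe A B P (coMk A B P g)
  map_add' _ _ := rfl
  map_smul' a g := by
    refine LinearMap.ext fun s => ?_
    show coFn A B P (reCo A B P g) (bV A B (vB A B s * algebraMap A B a))
        = a • coFn A B P (reCo A B P g) s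
    rw [mul_comm]
    have h := (coFn A B P (reCo A B P g)).map_smul a s
    rw [show (a • s : RB A B) = bV A B (algebraMap A B a * vB A B s) from rfl] at h
    exact h
  left_inv _ := rfl
  right_inv _ := rfl

variable (M N : ModuleCat A)

/-- Identity cast realizing the restricted hom-module as a linear-map type. -/
def homFn (φ : (ModuleCat.restrictScalars (algebraMap A B)).obj
      (ModuleCat.of B
        ((ModuleCat.coextendScalars (algebraMap A B)).obj M →ₗ[B]
          (ModuleCat.coextendScalars (algebraMap A B)).obj N))) :
    ((ModuleCat.coextendScalars (algebraMap A B)).obj M →ₗ[B]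
      (ModuleCat.coextendScalars (algebraMap A B)).obj N) := φ

/-- Inverse identity cast. -/
def homMk (φ : ((ModuleCat.coextendScalars (algebraMap A B)).obj M →ₗ[B]
      (ModuleCat.coextendScalars (algebraMap A B)).obj N)) :
    (ModuleCat.restrictScalars (algebraMap A B)).obj
      (ModuleCat.of B
        ((ModuleCat.coextendScalars (algebraMap A B)).obj M →ₗ[B]
          (ModuleCat.coextendScalars (algebraMap A B)).obj N)) := φ

set_option maxHeartbeats 1000000 in
/-- Adjunction-style equivalence, as `A`-modules:
`Hom_B(Hom_A(B,M), Hom_A(B,N)) ≃ Hom_A(Hom_A(B,M), N)`. -/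
noncomputable def auxAdj :
    ((ModuleCat.restrictScalars (algebraMap A B)).obj
        (ModuleCat.of B
          ((ModuleCat.coextendScalars (algebraMap A B)).obj M →ₗ[B]
            (ModuleCat.coextendScalars (algebraMap A B)).obj N)) : Type _)
      ≃ₗ[A]
      (((ModuleCat.restrictScalars (algebraMap A B)).obj
          ((ModuleCat.coextendScalars (algebraMap A B)).obj M) : Type _) →ₗ[A] N) where
  toFun φ :=
    { toFun := fun g => coFn A B N (homFn A B M N φ (reCo A B M g)) (bV A B 1)
      map_add' := fun g g' => by
        show coFn A B N (homFn A B M N φ (reCo A B M g + reCo A B M g')) (bV A B 1) = _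
        rw [map_add]
        rfl
      map_smul' := fun a g => by
        show coFn A B N (homFn A B M N φ ((algebraMap A B a) • reCo A B M g)) (bV A B 1)
            = a • coFn A B N (homFn A B M N φ (reCo A B M g)) (bV A B 1)
        rw [map_smul]
        show coFn A B N (homFn A B M N φ (reCo A B M g)) (bV A B (1 * algebraMap A B a))
            = a • coFn A B N (homFn A B M N φ (reCo A B M g)) (bV A B 1)
        rw [one_mul]
        have h := (coFn A B N (homFn A B M N φ (reCo A B M g))).map_smul a (bV A B 1)
        rw [show (a • bV A B 1 : RB A B) = bV A B (algebraMap A B a * 1) from rfl, mul_one] at h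
        exact h }
  invFun σ :=
    homMk A B M N
      { toFun := fun g => coMk A B N
          { toFun := fun s => σ (coRe A B M (vB A B s • g))
            map_add' := fun s t => by
              show σ (coRe A B M ((vB A B s + vB A B t) • g)) = _
              rw [add_smul]
              exact σ.map_add (coRe A B M (vB A B s • g)) (coRe A B M (vB A B t • g))
            map_smul' := fun a s => by
              show σ (coRe A B M ((algebraMap A B a * vB A B s) • g))
                  = a • σ (coRe A B M (vB A B s • g))
              rw [mul_smul]
              exact σ.map_smul a (coRe A B M (vB A B s • g)) }
        map_add' := fun g g' => by
          refine LinearMap.ext fun s => ?_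
          show σ (coRe A B M (vB A B s • (g + g'))) = σ (coRe A B M (vB A B s • g))
              + σ (coRe A B M (vB A B s • g'))
          have hsa : (vB A B s • (g + g') : (ModuleCat.coextendScalars (algebraMap A B)).obj M)
              = vB A B s • g + vB A B s • g' := smul_add _ _ _
          rw [hsa]
          exact σ.map_add (coRe A B M (vB A B s • g)) (coRe A B M (vB A B s • g'))
        map_smul' := fun b g => by
          refine LinearMap.ext fun s => ?_
          show σ (coRe A B M (vB A B s • b • g)) = σ (coRe A B M ((vB A B s * b) • g))
          rw [mul_smul] }
  map_add' φ ψ := by refine LinearMap.ext fun g => ?_; rfl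
  map_smul' a φ := by
    refine LinearMap.ext fun g => ?_
    show coFn A B N ((algebraMap A B a • homFn A B M N φ) (reCo A B M g)) (bV A B 1)
        = a • coFn A B N (homFn A B M N φ (reCo A B M g)) (bV A B 1)
    show coFn A B N (homFn A B M N φ (reCo A B M g)) (bV A B (1 * algebraMap A B a))
        = a • coFn A B N (homFn A B M N φ (reCo A B M g)) (bV A B 1)
    rw [one_mul]
    have h := (coFn A B N (homFn A B M N φ (reCo A B M g))).map_smul a (bV A B 1)
    rw [show (a • bV A B 1 : RB A B) = bV A B (algebraMap A B a * 1) from rfl, mul_one] at h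
    exact h
  left_inv φ := by
    refine LinearMap.ext fun x => ?_
    refine LinearMap.ext fun s => ?_
    show coFn A B N (homFn A B M N φ ((vB A B s) • x)) (bV A B 1)
        = coFn A B N (homFn A B M N φ x) s
    rw [map_smul]
    show coFn A B N (homFn A B M N φ x) (bV A B (1 * vB A B s))
        = coFn A B N (homFn A B M N φ x) s
    rw [one_mul]
    rfl
  right_inv σ := by
    refine LinearMap.ext fun g => ?_
    show σ (coRe A B M ((1 : B) • reCo A B M g)) = σ g
    rw [one_smul]
    rfl

end Aux

theorem hom_coextend_coextend_iso_coextend_hom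
    (A B : Type) [CommRing A] [CommRing B] [Algebra A B]
    [Module.Free A B] [Module.Finite A B] (M N : ModuleCat A) :
    Nonempty
      ((ModuleCat.restrictScalars (algebraMap A B)).obj
          (ModuleCat.of B
            ((ModuleCat.coextendScalars (algebraMap A B)).obj M →ₗ[B]
              (ModuleCat.coextendScalars (algebraMap A B)).obj N)) ≅
        (ModuleCat.restrictScalars (algebraMap A B)).obj
          ((ModuleCat.coextendScalars (algebraMap A B)).obj
            (ModuleCat.of A (M →ₗ[A] N)))) := by
  classical
  let ι := Module.Free.ChooseBasisIndex A B
  let b : Module.Basis ι A B := Module.Free.chooseBasis A B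
  let e1 := auxAdj A B M N
  let e15 := LinearEquiv.arrowCongr (σ₁₁' := RingHom.id A) (σ₂₂' := RingHom.id A) (eCo A B M) (LinearEquiv.refl A N)
  let e2 := LinearEquiv.arrowCongr (σ₁₁' := RingHom.id A) (σ₂₂' := RingHom.id A)
    (LinearEquiv.arrowCongr (σ₁₁' := RingHom.id A) (σ₂₂' := RingHom.id A) (eB A B) (LinearEquiv.refl A M)) (LinearEquiv.refl A N)
  let e3 := LinearEquiv.arrowCongr (σ₁₁' := RingHom.id A) (σ₂₂' := RingHom.id A) (b.constr A (M' := M)).symm (LinearEquiv.refl A N)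
  let e4 := (LinearMap.lsum (R := A) (φ := fun _ : ι => (M : Type _)) (M := (N : Type _)) A).symm
  let e5 := b.constr (M' := ((M : Type _) →ₗ[A] N)) A
  let e6 := LinearEquiv.arrowCongr (σ₁₁' := RingHom.id A) (σ₂₂' := RingHom.id A) (eB A B).symm
    (LinearEquiv.refl A ((M : Type _) →ₗ[A] N))
  let e7 := (eCo A B (ModuleCat.of A ((M : Type _) →ₗ[A] N))).symm
  exact ⟨(e1 ≪≫ₗ e15 ≪≫ₗ e2 ≪≫ₗ e3 ≪≫ₗ e4 ≪≫ₗ e5 ≪≫ₗ e6 ≪≫ₗ e7).toModuleIso⟩
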